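/- Let L ≥ 2, φ ∈ ℝ, and let E_N(φ) denote the sum of the N smallest values among {−2cos((2πl+φ)/L) : l = 0,…,L−1} (counted with multiplicity). If N is odd, then E_N(0) ≤ E_N(φ) for all φ; if N is even, then E_N(π) ≤ E_N(φ) for all φ. -/

import Mathlib

open Real

/-! ### Auxiliary list/multiset lemmas -/

lemma take_sum_le_of_sublist : ∀ {l t : List ℝ}, List.Sublist t l → l.Pairwise (· ≤ ·) →
    (l.take t.length).sum ≤ t.sum := by
  intro l t h
  induction h with
  | slnil => simp
  | cons a h ih =>
    intro hs
    rename_i t' l₁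
    rw [List.pairwise_cons] at hs
    obtain ⟨ha, hs₁⟩ := hs
    cases ht : t'.length with
    | zero => rw [List.length_eq_zero_iff.mp ht]; simp
    | succ m =>
      have hle : m + 1 ≤ l₁.length := ht ▸ h.length_le
      have hm : m < l₁.length := by omega
      have h1 : ((a :: l₁).take (m+1)).sum = a + (l₁.take m).sum := by
        simp [List.take_succ_cons]
      have h2 : (l₁.take (m+1)).sum = (l₁.take m).sum + l₁[m] := List.sum_take_succ _ _ hm
      have h3 : a ≤ l₁[m] := ha _ (List.getElem_mem hm)
      have h4 := ih hs₁
      rw [ht] at h4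
      rw [h1]
      linarith
  | cons_cons a h ih =>
    intro hs
    rw [List.pairwise_cons] at hs
    simp only [List.length_cons, List.take_succ_cons, List.sum_cons]
    have := ih hs.2
    linarith

lemma sort_take_sum_le (M T : Multiset ℝ) (hT : T ≤ M) :
    ((M.sort (· ≤ ·)).take (Multiset.card T)).sum ≤ T.sum := by
  set t := T.sort (· ≤ ·) with ht
  have hcoe : (↑t : Multiset ℝ) = T := Multiset.sort_eq _ _
  have hcoeM : (↑(M.sort (· ≤ ·)) : Multiset ℝ) = M := Multiset.sort_eq _ _
  have hsub : List.Subperm t (M.sort (· ≤ ·)) :=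
    Multiset.coe_le.mp (by rw [hcoe, hcoeM]; exact hT)
  obtain ⟨l', hperm, hsl⟩ := hsub
  have hsorted' : l'.Pairwise (· ≤ ·) := (Multiset.pairwise_sort _ _).sublist hsl
  have : l' = t := List.Perm.eq_of_pairwise' hsorted' (Multiset.pairwise_sort _ _) hperm
  subst this
  have := take_sum_le_of_sublist hsl (Multiset.pairwise_sort _ _)
  have hlen : t.length = Multiset.card T := by rw [← hcoe]; simp
  have hsum : t.sum = T.sum := by rw [← hcoe]; simp
  rw [hlen, hsum] at this
  exact this

lemma take_sort_le (M : Multiset ℝ) (n : ℕ) :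
    (↑((M.sort (· ≤ ·)).take n) : Multiset ℝ) ≤ M := by
  have : (↑((M.sort (· ≤ ·)).take n) : Multiset ℝ) ≤ ↑(M.sort (· ≤ ·)) :=
    Multiset.coe_le.mpr (List.take_sublist _ _).subperm
  rwa [Multiset.sort_eq] at this

lemma exists_le_map {α β : Type*} [DecidableEq α] [DecidableEq β] (f : α → β) :
    ∀ (T : Multiset β) (s : Multiset α), T ≤ s.map f → ∃ s', s' ≤ s ∧ s'.map f = T := by
  intro T
  induction T using Multiset.induction_on with
  | empty => exact fun s _ => ⟨0, zero_le, rfl⟩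
  | cons a T' ih =>
    intro s h
    have ha : a ∈ s.map f := Multiset.mem_of_le h (Multiset.mem_cons_self _ _)
    obtain ⟨b, hb, rfl⟩ := Multiset.mem_map.mp ha
    have h' : T' ≤ (s.erase b).map f := by
      rw [Multiset.map_erase_of_mem _ _ hb]
      have := Multiset.erase_le_erase (f b) h
      rwa [Multiset.erase_cons_head] at this
    obtain ⟨s'', hs'', hmap⟩ := ih (s.erase b) h'
    refine ⟨b ::ₘ s'', ?_, by simp [hmap]⟩
    calc b ::ₘ s'' ≤ b ::ₘ s.erase b := Multiset.cons_le_cons _ hs''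
    _ = s := Multiset.cons_erase hb

/-! ### Trigonometric lemmas -/

lemma cos_tel (x d : ℝ) (n : ℕ) :
    (2 * sin (d/2)) * ∑ i ∈ Finset.range n, cos (x + i*d)
      = sin (x + n*d - d/2) - sin (x - d/2) := by
  rw [Finset.mul_sum]
  have h : ∀ i ∈ Finset.range n, 2 * sin (d/2) * cos (x + i*d)
      = sin (x + ((i:ℕ)+1:ℕ)*d - d/2) - sin (x + i*d - d/2) := by
    intro i _
    rw [Real.sin_sub_sin]
    push_cast
    ring_nf
  rw [Finset.sum_congr rfl h, Finset.sum_range_sub (fun i => sin (x + i*d - d/2))]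
  norm_num

lemma cos_le_cos_interval {a x : ℝ} (ha0 : 0 ≤ a) (haπ : a ≤ π) (h1 : a ≤ x)
    (h2 : x ≤ 2*π - a) : cos x ≤ cos a := by
  rcases le_total x π with h | h
  · exact Real.cos_le_cos_of_nonneg_of_le_pi ha0 h h1
  · have hx : cos x = cos (2*π - x) := by
      rw [Real.cos_sub]; simp
    rw [hx]
    exact Real.cos_le_cos_of_nonneg_of_le_pi ha0 (by linarith) (by linarith)

/-! ### The bathtub (swap) lemma -/

lemma sum_le_sum_block {A S B : Finset ℕ} (g : ℕ → ℝ) (c : ℝ) (hS : S ⊆ A) (hB : B ⊆ A)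
    (hcard : S.card = B.card) (h1 : ∀ b ∈ B, c ≤ g b) (h2 : ∀ a ∈ A, a ∉ B → g a ≤ c) :
    ∑ l ∈ S, g l ≤ ∑ l ∈ B, g l := by
  classical
  have e1 : ∑ l ∈ S ∩ B, g l + ∑ l ∈ S \ B, g l = ∑ l ∈ S, g l :=
    Finset.sum_inter_add_sum_sdiff S B g
  have e2 : ∑ l ∈ B ∩ S, g l + ∑ l ∈ B \ S, g l = ∑ l ∈ B, g l :=
    Finset.sum_inter_add_sum_sdiff B S g
  have hSB : ∑ l ∈ S \ B, g l ≤ (S \ B).card • c := by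
    apply Finset.sum_le_card_nsmul
    intro x hx
    rw [Finset.mem_sdiff] at hx
    exact h2 x (hS hx.1) hx.2
  have hBS : (B \ S).card • c ≤ ∑ l ∈ B \ S, g l := by
    apply Finset.card_nsmul_le_sum
    intro x hx
    exact h1 x (Finset.mem_sdiff.mp hx).1
  have hc1 : (S \ B).card + (S ∩ B).card = S.card := Finset.card_sdiff_add_card_inter S B
  have hc2 : (B \ S).card + (B ∩ S).card = B.card := Finset.card_sdiff_add_card_inter B S
  have hic : (S ∩ B).card = (B ∩ S).card := by rw [Finset.inter_comm]
  have hcc : (S \ B).card = (B \ S).card := by omega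
  have hie : ∑ l ∈ S ∩ B, g l = ∑ l ∈ B ∩ S, g l := by rw [Finset.inter_comm]
  rw [hcc] at hSB
  rw [nsmul_eq_mul] at hSB hBS
  linarith

/-! ### The optimal block of momenta -/

def blockB (L N : ℕ) : Finset ℕ :=
  (Finset.range L).filter (fun l => l ≤ N - 1 - N/2 ∨ L - N/2 ≤ l)

def eB (L N : ℕ) (i : ℕ) : ℕ := if i < N/2 then L - N/2 + i else i - N/2
def eB' (L N : ℕ) (l : ℕ) : ℕ := if L - N/2 ≤ l then l - (L - N/2) else l + N/2

section
variable {L N : ℕ} (hL2 : 2 ≤ L) (hN1 : 1 ≤ N) (hNL : N ≤ L)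
include hL2 hN1 hNL

lemma eB_mem : ∀ i ∈ Finset.range N, eB L N i ∈ blockB L N := by
  intro i hi
  simp only [Finset.mem_range] at hi
  simp only [blockB, eB, Finset.mem_filter, Finset.mem_range]
  split_ifs <;> omega

lemma eB'_mem : ∀ l ∈ blockB L N, eB' L N l ∈ Finset.range N := by
  intro l hl
  simp only [blockB, Finset.mem_filter, Finset.mem_range] at hl
  simp only [eB', Finset.mem_range]
  split_ifs <;> omega

lemma eB_left_inv : ∀ i ∈ Finset.range N, eB' L N (eB L N i) = i := by
  intro i hi
  simp only [Finset.mem_range] at hi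
  simp only [eB, eB']
  split_ifs <;> omega

lemma eB_right_inv : ∀ l ∈ blockB L N, eB L N (eB' L N l) = l := by
  intro l hl
  simp only [blockB, Finset.mem_filter, Finset.mem_range] at hl
  simp only [eB, eB']
  split_ifs <;> omega

lemma blockB_card : (blockB L N).card = N := by
  rw [Finset.card_nbij' (eB' L N) (eB L N) (eB'_mem hL2 hN1 hNL) (eB_mem hL2 hN1 hNL)
    (eB_right_inv hL2 hN1 hNL) (eB_left_inv hL2 hN1 hNL), Finset.card_range]

lemma blockB_sum (φ : ℝ) :
    ∑ l ∈ blockB L N, cos ((2*π*l + φ)/L)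
      = sin (N*π/L) * cos ((φ + N*π - π - 2*(N/2 : ℕ)*π)/L) / sin (π/L) := by
  have hL0 : (L:ℝ) ≠ 0 := by positivity
  have hsin : 0 < sin (π/L) := by
    apply Real.sin_pos_of_pos_of_lt_pi
    · positivity
    · rw [div_lt_iff₀ (by positivity)]
      nlinarith [Real.pi_pos, (by exact_mod_cast hL2 : (2:ℝ) ≤ L),
        mul_lt_mul_of_pos_left (show (1:ℝ) < L by exact_mod_cast hL2) Real.pi_pos]
  set k := N/2 with hk
  have hkN : k + 1 ≤ N := by omega
  have hkL : k ≤ L := by omega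
  have h1 : ∑ i ∈ Finset.range N, cos ((φ - 2*k*π)/L + i*(2*π/L))
      = ∑ l ∈ blockB L N, cos ((2*π*l + φ)/L) := by
    apply Finset.sum_nbij' (eB L N) (eB' L N) (eB_mem hL2 hN1 hNL) (eB'_mem hL2 hN1 hNL)
      (eB_left_inv hL2 hN1 hNL) (eB_right_inv hL2 hN1 hNL)
    intro i hi
    simp only [Finset.mem_range] at hi
    simp only [eB, ← hk]
    split_ifs with h
    · have hc : ((L - k + i : ℕ) : ℝ) = (L:ℝ) - k + i := by
        push_cast [Nat.cast_sub hkL]; ring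
      rw [hc, show (2*π*((L:ℝ) - k + i) + φ)/L = (φ - 2*k*π)/L + i*(2*π/L) + 2*π by
        field_simp; ring, Real.cos_add_two_pi]
    · have hki : k ≤ i := by omega
      have hc : ((i - k : ℕ) : ℝ) = (i:ℝ) - k := by push_cast [Nat.cast_sub hki]; ring
      rw [hc]
      congr 1
      field_simp
      ring
  have key : (2 * sin (π/L)) * ∑ l ∈ blockB L N, cos ((2*π*l + φ)/L)
      = 2 * (sin (N*π/L) * cos ((φ + N*π - π - 2*(k:ℕ)*π)/L)) := by
    rw [← h1]
    have ht := cos_tel ((φ - 2*k*π)/L) (2*π/L) N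
    rw [show (2*π/L)/2 = π/L by ring] at ht
    rw [ht, Real.sin_sub_sin]
    have e1 : ((φ - 2*k*π)/L + N*(2*π/L) - π/L - ((φ - 2*k*π)/L - π/L))/2 = N*π/L := by
      field_simp; ring
    have e2 : ((φ - 2*k*π)/L + N*(2*π/L) - π/L + ((φ - 2*k*π)/L - π/L))/2
        = (φ + N*π - π - 2*(k:ℕ)*π)/L := by
      field_simp; ring
    rw [e1, e2]
    ring
  rw [eq_div_iff (ne_of_gt hsin)]
  linarith [key]

lemma pi_div_le : (N:ℝ)*π/L ≤ π := by
  have hL0 : (0:ℝ) < L := by positivity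
  rw [div_le_iff₀ hL0]
  have : (N:ℝ) ≤ L := by exact_mod_cast hNL
  nlinarith [Real.pi_pos]

lemma blockB_ge {φ : ℝ} (hφ0 : 0 ≤ φ) (hφπ : φ ≤ π) :
    ∀ l ∈ blockB L N, cos ((N:ℝ)*π/L) ≤ cos ((2*π*l + φ)/L) := by
  intro l hl
  simp only [blockB, Finset.mem_filter, Finset.mem_range] at hl
  have hπ := Real.pi_pos
  have hL0 : (0:ℝ) < L := by positivity
  have hNπ : (N:ℝ)*π/L ≤ π := pi_div_le hL2 hN1 hNL
  rcases hl.2 with h | h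
  · have h2l : (2*(l:ℝ) + 1) ≤ N := by exact_mod_cast (by omega : 2*l + 1 ≤ N)
    apply Real.cos_le_cos_of_nonneg_of_le_pi (by positivity) hNπ
    gcongr
    nlinarith
  · have hlL : l < L := hl.1
    have h1 : (L:ℝ) ≤ (l:ℝ) + (N/2 : ℕ) := by exact_mod_cast (by omega : L ≤ l + N/2)
    have h2 : (2*((N/2 : ℕ):ℝ)) ≤ N := by exact_mod_cast (by omega : 2*(N/2) ≤ N)
    have h3 : (l:ℝ) + 1 ≤ L := by exact_mod_cast hlL
    have hx : cos ((2*π*l + φ)/L) = cos (2*π - (2*π*l + φ)/L) := by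
      rw [show 2*π - (2*π*l + φ)/L = -((2*π*l + φ)/L - 2*π) by ring, Real.cos_neg,
        Real.cos_sub_two_pi]
    rw [hx, show 2*π - (2*π*l + φ)/L = (2*π*L - 2*π*l - φ)/L by field_simp; ring]
    apply Real.cos_le_cos_of_nonneg_of_le_pi ?_ hNπ ?_
    · apply div_nonneg ?_ (le_of_lt hL0)
      nlinarith
    · gcongr
      nlinarith

lemma blockB_out {φ : ℝ} (hφ0 : 0 ≤ φ) (hφπ : φ ≤ π) :
    ∀ l ∈ Finset.range L, l ∉ blockB L N → cos ((2*π*l + φ)/L) ≤ cos ((N:ℝ)*π/L) := by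
  intro l hlr hl
  simp only [blockB, Finset.mem_filter, Finset.mem_range] at hl
  rw [Finset.mem_range] at hlr
  push_neg at hl
  have hl2 := hl hlr
  have hπ := Real.pi_pos
  have hL0 : (0:ℝ) < L := by positivity
  have ha : (N:ℝ) ≤ 2*l := by exact_mod_cast (by omega : N ≤ 2*l)
  have hb : (2*(l:ℝ) + 1 + N) ≤ 2*L := by exact_mod_cast (by omega : 2*l + 1 + N ≤ 2*L)
  apply cos_le_cos_interval (by positivity) (pi_div_le hL2 hN1 hNL)
  · gcongr
    nlinarith
  · rw [show 2*π - (N:ℝ)*π/L = (2*π*L - N*π)/L by field_simp]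
    gcongr
    nlinarith

end

/-- The multiset of single-particle energies `-2 cos((2πl+φ)/L)`, `l = 0, …, L-1`,
of a spinless fermion on an `L`-site ring threaded by flux `φ`. -/
noncomputable def ringLevels (L : ℕ) (φ : ℝ) : Multiset ℝ :=
  (Finset.range L).val.map (fun l => -2 * Real.cos ((2 * π * l + φ) / L))

/-- The ground-state energy of `N` spinless free fermions on an `L`-site ring with flux `φ`:
the sum of the `N` smallest single-particle energies (with multiplicity). -/
noncomputable def ringEnergy (L N : ℕ) (φ : ℝ) : ℝ :=
  (((ringLevels L φ).sort (· ≤ ·)).take N).sum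

lemma ringLevels_eq (L : ℕ) (φ : ℝ) : ringLevels L φ = (Finset.range L).val.map
    (fun l : ℕ => -2 * Real.cos ((2 * π * (l:ℝ) + φ) / L)) := by
  unfold ringLevels
  simp [Multiset.map_map]

lemma ringLevels_card (L : ℕ) (φ : ℝ) : Multiset.card (ringLevels L φ) = L := by
  rw [ringLevels_eq]
  simp

lemma map_perm_range (L : ℕ) (σ : ℕ → ℕ) (hmem : ∀ l, l < L → σ l < L)
    (hinj : ∀ a, a < L → ∀ b, b < L → σ a = σ b → a = b) :
    (Finset.range L).val.map σ = (Finset.range L).val := by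
  apply Multiset.eq_of_le_of_card_le
  · rw [Multiset.le_iff_subset]
    · intro x hx
      rw [Multiset.mem_map] at hx
      obtain ⟨a, ha, rfl⟩ := hx
      rw [Finset.mem_val, Finset.mem_range] at ha ⊢
      exact hmem a ha
    · apply Multiset.Nodup.map_on
      · intro x hx y hy
        rw [Finset.mem_val, Finset.mem_range] at hx hy
        exact hinj x hx y hy
      · exact (Finset.range L).nodup
  · simp

section
variable {L : ℕ} (hL2 : 2 ≤ L)
include hL2

lemma ringLevels_add_two_pi (φ : ℝ) : ringLevels L (φ + 2*π) = ringLevels L φ := by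
  have hL0 : (L:ℝ) ≠ 0 := by positivity
  rw [ringLevels_eq, ringLevels_eq]
  have step1 : (Finset.range L).val.map (fun l : ℕ => -2 * cos ((2 * π * (l:ℝ) + (φ + 2*π)) / L))
      = (Finset.range L).val.map ((fun l : ℕ => -2 * cos ((2 * π * l + φ) / L))
          ∘ (fun l => (l+1) % L)) := by
    apply Multiset.map_congr rfl
    intro l hl
    rw [Finset.mem_val, Finset.mem_range] at hl
    simp only [Function.comp]
    by_cases h : l + 1 = L
    · rw [h, Nat.mod_self]
      have hlL : (l:ℝ) + 1 = L := by exact_mod_cast congrArg (Nat.cast : ℕ → ℝ) h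
      rw [show (2*π*(l:ℝ) + (φ + 2*π))/L = (2*π*((0:ℕ):ℝ) + φ)/L + 2*π by
        push_cast
        field_simp
        linear_combination 2*π*hlL]
      rw [Real.cos_add_two_pi]
    · rw [Nat.mod_eq_of_lt (by omega)]
      congr 1
      push_cast
      ring
  rw [step1, ← Multiset.map_map,
    map_perm_range L _ (fun l hl => Nat.mod_lt _ (show 0 < L by omega)) ?_]
  intro a ha b hb h
  · have e : ∀ x, x < L → (x+1) % L = if x + 1 = L then 0 else x + 1 := by
      intro x hx
      split_ifs with h'
      · rw [h']; exact Nat.mod_self L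
      · exact Nat.mod_eq_of_lt (by omega)
    rw [e a ha, e b hb] at h
    split_ifs at h <;> omega

lemma ringLevels_neg (φ : ℝ) : ringLevels L (-φ) = ringLevels L φ := by
  have hL0 : (L:ℝ) ≠ 0 := by positivity
  rw [ringLevels_eq, ringLevels_eq]
  have step1 : (Finset.range L).val.map (fun l : ℕ => -2 * cos ((2 * π * (l:ℝ) + -φ) / L))
      = (Finset.range L).val.map ((fun l : ℕ => -2 * cos ((2 * π * l + φ) / L))
          ∘ (fun l => (L - l) % L)) := by
    apply Multiset.map_congr rfl
    intro l hl
    rw [Finset.mem_val, Finset.mem_range] at hl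
    simp only [Function.comp]
    by_cases h : l = 0
    · subst h
      rw [Nat.sub_zero, Nat.mod_self]
      rw [show (2*π*((0:ℕ):ℝ) + -φ)/L = -((2*π*((0:ℕ):ℝ) + φ)/L) by push_cast; ring,
        Real.cos_neg]
    · rw [Nat.mod_eq_of_lt (by omega)]
      have hc : ((L - l : ℕ) : ℝ) = (L:ℝ) - l := by
        push_cast [Nat.cast_sub (by omega : l ≤ L)]; ring
      rw [show (2*π*(l:ℝ) + -φ)/L = -((2*π*((L:ℝ) - l) + φ)/L - 2*π) by field_simp; ring]
      rw [Real.cos_neg, Real.cos_sub_two_pi, hc]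
  rw [step1, ← Multiset.map_map,
    map_perm_range L _ (fun l hl => Nat.mod_lt _ (show 0 < L by omega)) ?_]
  intro a ha b hb h
  · have e : ∀ x, x < L → (L - x) % L = if x = 0 then 0 else L - x := by
      intro x hx
      split_ifs with h'
      · rw [h']; simp [Nat.mod_self]
      · exact Nat.mod_eq_of_lt (by omega)
    rw [e a ha, e b hb] at h
    split_ifs at h <;> omega

lemma ringLevels_add_int (n : ℤ) (φ : ℝ) : ringLevels L (φ + 2*π*n) = ringLevels L φ := by
  induction n using Int.induction_on with
  | zero => simp
  | succ k ih =>
    rw [show φ + 2*π*((k:ℤ)+1:ℤ) = (φ + 2*π*(k:ℤ)) + 2*π by push_cast; ring,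
      ringLevels_add_two_pi hL2, ih]
  | pred k ih =>
    have h := ringLevels_add_two_pi hL2 (φ + 2*π*(-(k:ℤ)-1:ℤ))
    rw [show φ + 2*π*(-(k:ℤ)-1:ℤ) + 2*π = φ + 2*π*(-(k:ℤ):ℤ) by push_cast; ring] at h
    rw [← h]
    exact ih

lemma ringLevels_reduce (φ : ℝ) :
    ∃ ψ, 0 ≤ ψ ∧ ψ ≤ π ∧ ringLevels L φ = ringLevels L ψ := by
  have hπ := Real.pi_pos
  set n := ⌊φ / (2*π)⌋ with hn
  set ψ0 := φ - 2*π*n with hψ0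
  have h1 : (n:ℝ) ≤ φ / (2*π) := Int.floor_le _
  have h2 : φ / (2*π) < n + 1 := Int.lt_floor_add_one _
  have hψ00 : 0 ≤ ψ0 := by
    rw [hψ0]
    have := mul_le_mul_of_nonneg_left h1 (by positivity : (0:ℝ) ≤ 2*π)
    rw [mul_div_cancel₀ _ (by positivity : (2*π:ℝ) ≠ 0)] at this
    linarith
  have hψ02 : ψ0 < 2*π := by
    rw [hψ0]
    have := mul_lt_mul_of_pos_left h2 (by positivity : (0:ℝ) < 2*π)
    rw [mul_div_cancel₀ _ (by positivity : (2*π:ℝ) ≠ 0)] at this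
    linarith
  have hlev0 : ringLevels L φ = ringLevels L ψ0 := by
    have hfl := ringLevels_add_int hL2 n ψ0
    rw [show ψ0 + 2*π*((n:ℤ):ℝ) = φ by rw [hψ0]; ring] at hfl
    exact hfl
  by_cases hc : ψ0 ≤ π
  · exact ⟨ψ0, hψ00, hc, hlev0⟩
  · refine ⟨2*π - ψ0, by linarith, by linarith, ?_⟩
    rw [hlev0, ← ringLevels_neg hL2 ψ0]
    have hfin := ringLevels_add_int hL2 1 (-ψ0)
    rw [show -ψ0 + 2*π*((1:ℤ):ℝ) = 2*π - ψ0 by push_cast; ring] at hfin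
    exact hfin.symm

end

/-! ### Main energy estimates -/

section
variable {L N : ℕ} (hL2 : 2 ≤ L)
include hL2

lemma sin_pi_div_pos : 0 < sin (π/(L:ℝ)) := by
  apply Real.sin_pos_of_pos_of_lt_pi
  · have : (0:ℝ) < L := by positivity
    positivity
  · rw [div_lt_iff₀ (by positivity)]
    nlinarith [Real.pi_pos,
      mul_lt_mul_of_pos_left (show (1:ℝ) < L by exact_mod_cast hL2) Real.pi_pos]

lemma energy_lower (hN1 : 1 ≤ N) (hNL : N ≤ L) {φ : ℝ} (hφ0 : 0 ≤ φ) (hφπ : φ ≤ π) :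
    -2 * (sin ((N:ℝ)*π/L) / sin (π/L)) ≤ ringEnergy L N φ := by
  classical
  have hsinp : 0 < sin (π/(L:ℝ)) := sin_pi_div_pos hL2
  set F := fun l : ℕ => -2 * Real.cos ((2*π*(l:ℝ) + φ)/L) with hF
  have hlev : ringLevels L φ = (Finset.range L).val.map F := ringLevels_eq L φ
  set t := ((ringLevels L φ).sort (· ≤ ·)).take N with htd
  have hE : ringEnergy L N φ = t.sum := rfl
  have hTle : (↑t : Multiset ℝ) ≤ ringLevels L φ := take_sort_le _ N
  have hTcard : Multiset.card (↑t : Multiset ℝ) = N := by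
    simp only [Multiset.coe_card, htd, List.length_take, Multiset.length_sort, ringLevels_card]
    omega
  rw [hlev] at hTle
  obtain ⟨Sm, hSm, hmap⟩ := exists_le_map F (↑t) (Finset.range L).val hTle
  have hnodup : Sm.Nodup := Multiset.nodup_of_le hSm (Finset.range L).nodup
  have hSsub : (⟨Sm, hnodup⟩ : Finset ℕ) ⊆ Finset.range L := by
    rw [← Finset.val_le_iff]
    exact hSm
  have hScard : (⟨Sm, hnodup⟩ : Finset ℕ).card = N := by
    have hc := congrArg Multiset.card hmap
    rw [Multiset.card_map, hTcard] at hc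
    exact hc
  have hsum : t.sum = ∑ l ∈ (⟨Sm, hnodup⟩ : Finset ℕ), F l := by
    have : ∑ l ∈ (⟨Sm, hnodup⟩ : Finset ℕ), F l = (Sm.map F).sum := rfl
    rw [this, hmap]
    exact (Multiset.sum_coe t).symm
  have hsum2 : ∑ l ∈ (⟨Sm, hnodup⟩ : Finset ℕ), F l
      = -2 * ∑ l ∈ (⟨Sm, hnodup⟩ : Finset ℕ), cos ((2*π*(l:ℝ) + φ)/L) := by
    rw [Finset.mul_sum]
  have hswap : ∑ l ∈ (⟨Sm, hnodup⟩ : Finset ℕ), cos ((2*π*(l:ℝ) + φ)/L)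
      ≤ ∑ l ∈ blockB L N, cos ((2*π*(l:ℝ) + φ)/L) :=
    sum_le_sum_block _ (cos ((N:ℝ)*π/L)) hSsub (Finset.filter_subset _ _)
      (hScard.trans (blockB_card hL2 hN1 hNL).symm) (blockB_ge hL2 hN1 hNL hφ0 hφπ)
      (blockB_out hL2 hN1 hNL hφ0 hφπ)
  have hbs := blockB_sum hL2 hN1 hNL φ
  have hsinN : 0 ≤ sin ((N:ℝ)*π/L) :=
    Real.sin_nonneg_of_nonneg_of_le_pi (by positivity) (pi_div_le hL2 hN1 hNL)
  have hBle : ∑ l ∈ blockB L N, cos ((2*π*(l:ℝ) + φ)/L) ≤ sin ((N:ℝ)*π/L) / sin (π/L) := by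
    rw [hbs]
    apply (div_le_div_iff_of_pos_right hsinp).mpr
    exact mul_le_of_le_one_right hsinN (Real.cos_le_one _)
  rw [hE, hsum, hsum2]
  linarith

lemma energy_upper (hN1 : 1 ≤ N) (hNL : N ≤ L) {φ : ℝ}
    (hcos : cos ((φ + N*π - π - 2*(N/2:ℕ)*π)/L) = 1) :
    ringEnergy L N φ ≤ -2 * (sin ((N:ℝ)*π/L) / sin (π/L)) := by
  classical
  have hsinp : 0 < sin (π/(L:ℝ)) := sin_pi_div_pos hL2
  set F := fun l : ℕ => -2 * Real.cos ((2*π*(l:ℝ) + φ)/L) with hF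
  have hTB : ((blockB L N).val.map F) ≤ ringLevels L φ := by
    rw [ringLevels_eq]
    exact Multiset.map_le_map (Finset.val_le_iff.mpr (Finset.filter_subset _ _))
  have hcard : Multiset.card ((blockB L N).val.map F) = N := by
    rw [Multiset.card_map]
    exact blockB_card hL2 hN1 hNL
  have h := sort_take_sum_le (ringLevels L φ) _ hTB
  rw [hcard] at h
  have hsum : ((blockB L N).val.map F).sum = ∑ l ∈ blockB L N, F l := rfl
  have hsum2 : ∑ l ∈ blockB L N, F l
      = -2 * ∑ l ∈ blockB L N, cos ((2*π*(l:ℝ) + φ)/L) := by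
    rw [Finset.mul_sum]
  have hbs := blockB_sum hL2 hN1 hNL φ
  rw [hcos, mul_one] at hbs
  calc ringEnergy L N φ ≤ ((blockB L N).val.map F).sum := h
    _ = -2 * (sin ((N:ℝ)*π/L) / sin (π/L)) := by rw [hsum, hsum2, hbs]

lemma energy_zero_of_le (hNL : L ≤ N) (φ : ℝ) : ringEnergy L N φ = 0 := by
  have hL0 : (L:ℝ) ≠ 0 := by positivity
  have hsinp : 0 < sin (π/(L:ℝ)) := sin_pi_div_pos hL2
  have hlen : ((ringLevels L φ).sort (· ≤ ·)).length = L := by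
    rw [Multiset.length_sort, ringLevels_card]
  unfold ringEnergy
  rw [List.take_of_length_le (by rw [hlen]; exact hNL)]
  have h1 : ((ringLevels L φ).sort (· ≤ ·)).sum = (ringLevels L φ).sum := by
    rw [← Multiset.sum_coe, Multiset.sort_eq]
  rw [h1, ringLevels_eq]
  have h2 : ((Finset.range L).val.map (fun l : ℕ => -2 * cos ((2*π*(l:ℝ) + φ)/L))).sum
      = ∑ l ∈ Finset.range L, -2 * cos ((2*π*(l:ℝ) + φ)/L) := rfl
  rw [h2]
  have h3 : ∀ l ∈ Finset.range L, -2 * cos ((2*π*(l:ℝ) + φ)/L)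
      = -2 * cos (φ/L + l*(2*π/L)) := by
    intro l _
    congr 2
    field_simp
    ring
  rw [Finset.sum_congr rfl h3, ← Finset.mul_sum]
  have htel := cos_tel (φ/L) (2*π/L) L
  rw [show (2*π/L)/2 = π/L by ring] at htel
  rw [show φ/L + (L:ℝ)*(2*π/L) - π/L = (φ/L - π/L) + 2*π by field_simp; ring,
    Real.sin_add_two_pi, sub_self] at htel
  have : ∑ i ∈ Finset.range L, cos (φ/L + i*(2*π/L)) = 0 := by
    have h2s : 2 * sin (π/(L:ℝ)) ≠ 0 := by positivity
    exact (mul_eq_zero.mp htel).resolve_left h2s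
  rw [this]
  ring

end

theorem stmt_13 (L : ℕ) (hL : 2 ≤ L) (N : ℕ) :
    (Odd N → ∀ φ : ℝ, ringEnergy L N 0 ≤ ringEnergy L N φ) ∧
    (Even N → ∀ φ : ℝ, ringEnergy L N π ≤ ringEnergy L N φ) := by
  have hπ := Real.pi_pos
  constructor
  · intro hodd φ
    have hN1 : 1 ≤ N := by
      rcases hodd with ⟨m, hm⟩
      omega
    by_cases hNL : N ≤ L
    · obtain ⟨ψ, hψ0, hψπ, hlev⟩ := ringLevels_reduce hL φ
      have heq : ringEnergy L N φ = ringEnergy L N ψ := by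
        unfold ringEnergy
        rw [hlev]
      have hup : ringEnergy L N 0 ≤ -2 * (sin ((N:ℝ)*π/L) / sin (π/L)) := by
        apply energy_upper hL hN1 hNL
        have hk : (N:ℝ) = 2*((N/2:ℕ):ℝ) + 1 := by
          exact_mod_cast (by rcases hodd with ⟨m, hm⟩; omega : N = 2*(N/2) + 1)
        rw [show ((0:ℝ) + (N:ℝ)*π - π - 2*((N/2:ℕ):ℝ)*π)/(L:ℝ) = 0 by rw [hk]; ring,
          Real.cos_zero]
      have hlo := energy_lower hL hN1 hNL hψ0 hψπ
      rw [heq]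
      linarith
    · push_neg at hNL
      rw [energy_zero_of_le hL (le_of_lt hNL) 0, energy_zero_of_le hL (le_of_lt hNL) φ]
  · intro heven φ
    rcases Nat.eq_zero_or_pos N with h0 | hN1
    · subst h0
      simp [ringEnergy]
    · by_cases hNL : N ≤ L
      · obtain ⟨ψ, hψ0, hψπ, hlev⟩ := ringLevels_reduce hL φ
        have heq : ringEnergy L N φ = ringEnergy L N ψ := by
          unfold ringEnergy
          rw [hlev]
        have hup : ringEnergy L N π ≤ -2 * (sin ((N:ℝ)*π/L) / sin (π/L)) := by
          apply energy_upper hL hN1 hNL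
          have hk : (N:ℝ) = 2*((N/2:ℕ):ℝ) := by
            exact_mod_cast (by rcases heven with ⟨m, hm⟩; omega : N = 2*(N/2))
          rw [show (π + (N:ℝ)*π - π - 2*((N/2:ℕ):ℝ)*π)/(L:ℝ) = 0 by rw [hk]; ring,
            Real.cos_zero]
        have hlo := energy_lower hL hN1 hNL hψ0 hψπ
        rw [heq]
        linarith
      · push_neg at hNL
        rw [energy_zero_of_le hL (le_of_lt hNL) π, energy_zero_of_le hL (le_of_lt hNL) φ]
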